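/- The abelian group Ext^1(ℚ, ℤ) is divisible and torsion-free, i.e., it naturally carries the structure of a ℚ-vector space. -/

import Mathlib

open CategoryTheory

section Aux

noncomputable instance mapHomotopyCategory_additive' {V W : Type*} [Category V] [Category W]
    [Preadditive V] [Preadditive W] {ι : Type*} (F : V ⥤ W) [F.Additive] (c : ComplexShape ι) :
    (F.mapHomotopyCategory c).Additive where
  map_add {K L f g} := by
    obtain ⟨f, rfl⟩ := (HomotopyCategory.quotient V c).map_surjective f
    obtain ⟨g, rfl⟩ := (HomotopyCategory.quotient V c).map_surjective g
    exact (F.mapHomotopyCategory c).map_add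

noncomputable instance projRes_additive' {C : Type*} [Category C] [Abelian C]
    [HasProjectiveResolutions C] : (projectiveResolutions C).Additive where
  map_add {X Y f g} := by
    dsimp [projectiveResolutions]
    erw [← (HomotopyCategory.quotient _ _).map_add]
    apply HomotopyCategory.eq_of_homotopy
    apply ProjectiveResolution.liftHomotopy (f + g) <;> simp

noncomputable instance extFirstVar_additive' (Y : ModuleCat ℤ) :
    ((((linearYoneda ℤ (ModuleCat ℤ)).obj Y).rightOp.leftDerived 1).leftOp).Additive := by
  unfold Functor.leftDerived Functor.leftDerivedToHomotopyCategory
  infer_instance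

/-- transfer a ℚ-module structure along an additive equivalence,
keeping the existing group structure. -/
def moduleOfAddEquiv' {M N : Type*} [AddCommGroup M] [AddCommGroup N] [Module ℚ N]
    (e : M ≃+ N) : Module ℚ M where
  smul q x := e.symm (q • e x)
  one_smul x := by show e.symm _ = _; simp
  mul_smul q r x := by show e.symm _ = e.symm (_ • e (e.symm _)); simp [mul_smul]
  smul_zero q := by show e.symm _ = _; simp
  smul_add q x y := by show e.symm _ = e.symm _ + e.symm _; simp [smul_add]
  add_smul q r x := by show e.symm _ = e.symm _ + e.symm _; simp [add_smul]
  zero_smul x := by show e.symm _ = _; simp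

/-- A torsion-free divisible abelian group (i.e. one on which every nonzero integer acts
bijectively) is a ℚ-vector space. -/
noncomputable def ratModuleOfBij' (M : Type) [AddCommGroup M]
    (h : ∀ n : ℤ, n ≠ 0 → Function.Bijective (fun x : M => n • x)) : Module ℚ M := by
  let N := LocalizedModule (nonZeroDivisors ℤ) M
  letI : Module ℚ N :=
    Module.compHom N ((FractionRing.algEquiv ℤ ℚ).symm.toRingEquiv.toRingHom)
  have hbij : Function.Bijective (LocalizedModule.mkLinearMap (nonZeroDivisors ℤ) M) := by
    constructor
    · intro x y hxy
      simp only [LocalizedModule.mkLinearMap_apply] at hxy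
      rw [LocalizedModule.mk_eq] at hxy
      obtain ⟨s, hs⟩ := hxy
      simp only [one_smul, Submonoid.smul_def] at hs
      exact (h s (nonZeroDivisors.coe_ne_zero s)).injective hs
    · intro z
      induction z using LocalizedModule.induction_on with
      | h x s =>
        obtain ⟨y, hy⟩ := (h s (nonZeroDivisors.coe_ne_zero s)).surjective x
        refine ⟨y, ?_⟩
        simp only [LocalizedModule.mkLinearMap_apply]
        rw [show x = (s : ℤ) • y from hy.symm, ← Submonoid.smul_def]
        exact (LocalizedModule.mk_cancel s y).symm
  exact moduleOfAddEquiv' (N := N)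
    { Equiv.ofBijective _ hbij with
      map_add' := map_add _ }

/-- multiplication by a nonzero integer on ℚ, as an isomorphism of ℤ-modules. -/
noncomputable def nIso' (n : ℤ) (hn : n ≠ 0) : ModuleCat.of ℤ ℚ ≅ ModuleCat.of ℤ ℚ :=
  LinearEquiv.toModuleIso
    { toFun := fun x => n • x
      map_add' := fun x y => smul_add n x y
      map_smul' := fun m x => smul_comm n m x
      invFun := fun x => (n : ℚ)⁻¹ * x
      left_inv := fun x => by
        have : (n:ℚ) ≠ 0 := Int.cast_ne_zero.mpr hn
        field_simp [zsmul_eq_mul]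
        rw [zsmul_eq_mul]
      right_inv := fun x => by
        have : (n:ℚ) ≠ 0 := Int.cast_ne_zero.mpr hn
        field_simp [zsmul_eq_mul]
        rw [zsmul_eq_mul]; field_simp }

lemma nIso'_hom (n : ℤ) (hn : n ≠ 0) : (nIso' n hn).hom = n • 𝟙 (ModuleCat.of ℤ ℚ) := by
  ext x; rfl

end Aux

/-- `Ext¹(A, B)` in the category of abelian groups, realized as ℤ-modules. -/
noncomputable abbrev Ext1 (A B : Type) [AddCommGroup A] [AddCommGroup B] : ModuleCat ℤ :=
  ((Ext ℤ (ModuleCat ℤ) 1).obj (Opposite.op (ModuleCat.of ℤ A))).obj (ModuleCat.of ℤ B)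

/-- Every nonzero integer acts bijectively on `Ext¹(ℚ, ℤ)`, because multiplication by `n`
is an automorphism of `ℚ` and `Ext` is an additive functor in its first variable. -/
lemma ext1_smul_bijective (n : ℤ) (hn : n ≠ 0) :
    Function.Bijective (fun x : Ext1 ℚ ℤ => n • x) := by
  have h1 : IsIso (((Ext ℤ (ModuleCat ℤ) 1).map (nIso' n hn).hom.op).app (ModuleCat.of ℤ ℤ)) := by
    have : IsIso ((nIso' n hn).hom.op) := inferInstance
    infer_instance
  have h2 : ((Ext ℤ (ModuleCat ℤ) 1).map (nIso' n hn).hom.op).app (ModuleCat.of ℤ ℤ)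
      = n • 𝟙 (Ext1 ℚ ℤ) := by
    have h3 : (nIso' n hn).hom.op = n • 𝟙 (Opposite.op (ModuleCat.of ℤ ℚ)) := by
      rw [nIso'_hom]; rfl
    rw [h3]
    show ((((linearYoneda ℤ (ModuleCat ℤ)).obj (ModuleCat.of ℤ ℤ)).rightOp.leftDerived 1).leftOp).map
      (n • 𝟙 (Opposite.op (ModuleCat.of ℤ ℚ))) = n • 𝟙 (Ext1 ℚ ℤ)
    rw [Functor.map_zsmul, CategoryTheory.Functor.map_id]; rfl
  have hb : Function.Bijective
      (((Ext ℤ (ModuleCat ℤ) 1).map (nIso' n hn).hom.op).app (ModuleCat.of ℤ ℤ)) :=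
    (ConcreteCategory.isIso_iff_bijective _).mp h1
  have he : (fun x : Ext1 ℚ ℤ => n • x)
      = ⇑(((Ext ℤ (ModuleCat ℤ) 1).map (nIso' n hn).hom.op).app (ModuleCat.of ℤ ℤ)) := by
    funext x
    rw [h2]
    rfl
  rw [he]; exact hb

/-- `Ext¹(ℚ, ℤ)` is divisible and torsion-free, i.e. it carries a ℚ-vector space
structure (compatible with its addition). -/
theorem ext1_rat_int_divisible_torsionFree :
    (∀ (x : Ext1 ℚ ℤ) (n : ℤ), n ≠ 0 → ∃ y : Ext1 ℚ ℤ, n • y = x) ∧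
    (∀ (x : Ext1 ℚ ℤ) (n : ℤ), n ≠ 0 → n • x = 0 → x = 0) ∧
    Nonempty (Module ℚ (Ext1 ℚ ℤ)) := by
  refine ⟨?_, ?_, ?_⟩
  · intro x n hn
    exact (ext1_smul_bijective n hn).surjective x
  · intro x n hn hx
    have h0 : n • (0 : Ext1 ℚ ℤ) = 0 := zsmul_zero n
    exact (ext1_smul_bijective n hn).injective (hx.trans h0.symm)
  · exact ⟨ratModuleOfBij' _ ext1_smul_bijective⟩
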